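/- Let d ≥ 1 and e be integers, let H(d,e) = {(s,t) ∈ ℂˣ × ℂˣ : s^d = t^e} with the subspace topology, and let h = gcd(d,e) (with gcd(d,0) = d). Then the connected component of the identity element (1,1) in H(d,e) is exactly the subgroup {(s,t) ∈ ℂˣ × ℂˣ : s^{d/h} = t^{e/h}}. -/

import Mathlib

/-- **Remark 2.3 (identity component of the stabilizer).** For integers `d ≥ 1` and `e`,
the connected component of the identity in
`H(d,e) = {(s,t) ∈ ℂˣ × ℂˣ : s^d = t^e}` (with the subspace topology) is exactly
`{(s,t) : s^(d/h) = t^(e/h)}` where `h = gcd(d,e)`. -/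
theorem stmt_7 (d e : ℤ) (hd : 1 ≤ d) :
    connectedComponent (⟨(1, 1), by simp⟩ : {p : ℂˣ × ℂˣ // p.1 ^ d = p.2 ^ e}) =
      {x : {p : ℂˣ × ℂˣ // p.1 ^ d = p.2 ^ e} |
        (x : ℂˣ × ℂˣ).1 ^ (d / (Int.gcd d e : ℤ)) =
          (x : ℂˣ × ℂˣ).2 ^ (e / (Int.gcd d e : ℤ))} := by
  set g : ℕ := Int.gcd d e with hg
  set h : ℤ := (g : ℤ) with hh
  have hd0 : d ≠ 0 := by omega
  have hgpos : 0 < g := Int.gcd_pos_of_ne_zero_left e hd0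
  set d' : ℤ := d / h with hd'
  set e' : ℤ := e / h with he'
  have hdd : d' * h = d := Int.ediv_mul_cancel (Int.gcd_dvd_left d e)
  have hee : e' * h = e := Int.ediv_mul_cancel (Int.gcd_dvd_right d e)
  have hcop : IsCoprime d' e' := by
    rw [Int.isCoprime_iff_gcd_eq_one]
    exact Int.gcd_div_gcd_div_gcd hgpos
  obtain ⟨u, v, huv⟩ := hcop
  set X := {p : ℂˣ × ℂˣ // p.1 ^ d = p.2 ^ e} with hX
  set x₀ : X := (⟨(1, 1), by simp⟩ : X) with hx₀
  set S : Set X := {x : X | (x : ℂˣ × ℂˣ).1 ^ d' = (x : ℂˣ × ℂˣ).2 ^ e'} with hS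
  -- the parametrization of S
  have key : ∀ z : ℂˣ, (z ^ e') ^ d = (z ^ d') ^ e := by
    intro z
    rw [← zpow_mul, ← zpow_mul]
    congr 1
    rw [← hdd, ← hee]; ring
  set φ : ℂˣ → X := fun z => ⟨(z ^ e', z ^ d'), key z⟩ with hφ
  have hφc : Continuous φ :=
    Continuous.subtype_mk (Continuous.prodMk (continuous_zpow e') (continuous_zpow d')) _
  -- S equals the range of φ
  have hrange : Set.range φ = S := by
    apply Set.eq_of_subset_of_subset
    · rintro _ ⟨z, rfl⟩
      simp only [hS, Set.mem_setOf_eq, hφ, ← zpow_mul]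
      rw [mul_comm d' e']
    · rintro ⟨⟨s, t⟩, hst⟩ hmem
      simp only [hS, Set.mem_setOf_eq] at hmem
      refine ⟨s ^ v * t ^ u, ?_⟩
      have hmem' : ∀ k : ℤ, s ^ (d' * k) = t ^ (e' * k) := fun k => by
        rw [zpow_mul, zpow_mul, hmem]
      have h1 : (s ^ v * t ^ u) ^ e' = s := by
        have hexp : v * e' + d' * u = 1 := by linear_combination huv
        calc (s ^ v * t ^ u) ^ e' = s ^ (v * e') * t ^ (e' * u) := by
              simp only [mul_zpow, ← zpow_mul]; rw [mul_comm u e']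
          _ = s ^ (v * e') * s ^ (d' * u) := by rw [hmem' u]
          _ = s := by rw [← zpow_add, hexp, zpow_one]
      have h2 : (s ^ v * t ^ u) ^ d' = t := by
        have hexp : e' * v + u * d' = 1 := by linear_combination huv
        calc (s ^ v * t ^ u) ^ d' = s ^ (d' * v) * t ^ (u * d') := by
              simp only [mul_zpow, ← zpow_mul]; rw [mul_comm v d']
          _ = t ^ (e' * v) * t ^ (u * d') := by rw [hmem' v]
          _ = t := by rw [← zpow_add, hexp, zpow_one]
      simp only [hφ]
      exact Subtype.ext (Prod.ext h1 h2)
  have hx₀S : x₀ ∈ S := by simp [hS, hx₀]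
  -- S is preconnected
  have hCU : IsPreconnected (Set.univ : Set ℂˣ) := by
    have h1 : IsConnected ({(0 : ℂ)}ᶜ) :=
      isConnected_compl_singleton_of_one_lt_rank
        (by rw [Complex.rank_real_complex]; exact Cardinal.one_lt_two) 0
    have h2 : (Units.val '' (Set.univ : Set ℂˣ) : Set ℂ) = {(0 : ℂ)}ᶜ := by
      rw [Set.image_univ]
      ext x
      constructor
      · rintro ⟨w, rfl⟩; exact w.ne_zero
      · intro hx; exact ⟨Units.mk0 x hx, rfl⟩
    have hind : Topology.IsInducing (Units.val : ℂˣ → ℂ) :=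
      Units.isOpenEmbedding_val.toIsEmbedding.toIsInducing
    rw [← hind.isPreconnected_image, h2]
    exact h1.isPreconnected
  have hSconn : IsPreconnected S := by
    rw [← hrange, ← Set.image_univ]
    exact hCU.image φ hφc.continuousOn
  -- S is clopen
  set ψ : X → ℂˣ := fun x => (x : ℂˣ × ℂˣ).1 ^ d' * ((x : ℂˣ × ℂˣ).2 ^ e')⁻¹ with hψ
  have hψc : Continuous ψ := by
    apply Continuous.mul
    · exact (continuous_zpow d').comp (continuous_fst.comp continuous_subtype_val)
    · exact continuous_inv.comp
        ((continuous_zpow e').comp (continuous_snd.comp continuous_subtype_val))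
  have hψroot : ∀ x : X, ψ x ^ g = 1 := by
    rintro ⟨⟨s, t⟩, hst⟩
    simp only [hψ]
    rw [← zpow_natCast, mul_zpow, inv_zpow, ← zpow_mul, ← zpow_mul, ← hh, hdd, hee, hst,
      mul_inv_cancel]
  have hψS : ∀ x : X, x ∈ S ↔ ψ x = 1 := by
    intro x
    simp only [hS, Set.mem_setOf_eq, hψ]
    rw [mul_inv_eq_one]
  have hclopen : IsClopen S := by
    constructor
    · have : S = {x : X | (fun y : X => (y : ℂˣ × ℂˣ).1 ^ d') x
          = (fun y : X => (y : ℂˣ × ℂˣ).2 ^ e') x} := rfl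
      rw [this]
      exact isClosed_eq
        ((continuous_zpow d').comp (continuous_fst.comp continuous_subtype_val))
        ((continuous_zpow e').comp (continuous_snd.comp continuous_subtype_val))
    · have hF : ({z : ℂˣ | z ^ g = 1 ∧ z ≠ 1} : Set ℂˣ).Finite := by
        haveI : NeZero g := ⟨hgpos.ne'⟩
        haveI : Finite ((rootsOfUnity g ℂ : Subgroup ℂˣ) : Set ℂˣ) :=
          inferInstanceAs (Finite (rootsOfUnity g ℂ))
        apply Set.Finite.subset (Set.toFinite ((rootsOfUnity g ℂ : Subgroup ℂˣ) : Set ℂˣ))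
        intro z hz
        exact (mem_rootsOfUnity g z).2 hz.1
      have hSeq : S = ψ ⁻¹' ({z : ℂˣ | z ^ g = 1 ∧ z ≠ 1})ᶜ := by
        ext x
        simp only [Set.mem_preimage, Set.mem_compl_iff, Set.mem_setOf_eq, hψS x]
        constructor
        · intro h1 h2; exact h2.2 h1
        · intro h1
          by_contra hne
          exact h1 ⟨hψroot x, hne⟩
      rw [hSeq]
      exact hF.isClosed.isOpen_compl.preimage hψc
  apply Set.eq_of_subset_of_subset
  · exact hclopen.connectedComponent_subset hx₀S
  · exact hSconn.subset_connectedComponent hx₀S
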